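/- There is a bijection between conditional expectations G : X → A (A-bimodule maps restricting to the identity on A) and elements h ∈ A satisfying ha = φ(a)h + F⊥(a) for all a ∈ A; the bijection is G ↦ G(p), and given such h the corresponding expectation is G(ap + bq) = ah + b(1 − h). -/

import Mathlib

open TensorProduct

/-- The linear map `A ⊗[R] B → X`, `a ⊗ b ↦ i a * j b`. -/
noncomputable def blendMul (R : Type*) {A B X : Type*} [CommRing R] [Ring A] [Ring B] [Ring X]
    [Algebra R A] [Algebra R B] [Algebra R X] (i : A →ₐ[R] X) (j : B →ₐ[R] X) :
    A ⊗[R] B →ₗ[R] X :=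
  (LinearMap.mul' R X).comp (TensorProduct.map i.toLinearMap j.toLinearMap)

theorem stmt10 {R A X : Type*} [CommRing R] [Ring A] [Ring X] [Algebra R A] [Algebra R X]
    (i : A →ₐ[R] X) (j : (R × R) →ₐ[R] X)
    (h1 : Function.Bijective (blendMul R i j)) (h2 : Function.Bijective (blendMul R j i))
    (p q : X) (hp : p = j (1, 0)) (hq : q = j (0, 1))
    (E F : A →ₗ[R] A)
    (hE : ∀ a : A, p * i a * p = i (E a) * p)
    (hF : ∀ a : A, q * i a * q = i (F a) * q) :
    (∀ G : X →ₗ[R] A, (∀ (a : A) (x : X), G (i a * x) = a * G x) →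
      (∀ (x : X) (a : A), G (x * i a) = G x * a) → (∀ a : A, G (i a) = a) →
      ∀ a : A, G p * a = (E a + F a - a) * G p + (a - F a)) ∧
    (∀ h : A, (∀ a : A, h * a = (E a + F a - a) * h + (a - F a)) →
      ∃ G : X →ₗ[R] A, (∀ (a : A) (x : X), G (i a * x) = a * G x) ∧
        (∀ (x : X) (a : A), G (x * i a) = G x * a) ∧ (∀ a : A, G (i a) = a) ∧
        G p = h ∧ ∀ a b : A, G (i a * p + i b * q) = a * h + b * (1 - h)) ∧
    (∀ G₁ G₂ : X →ₗ[R] A, (∀ (a : A) (x : X), G₁ (i a * x) = a * G₁ x) →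
      (∀ (x : X) (a : A), G₁ (x * i a) = G₁ x * a) → (∀ a : A, G₁ (i a) = a) →
      (∀ (a : A) (x : X), G₂ (i a * x) = a * G₂ x) →
      (∀ (x : X) (a : A), G₂ (x * i a) = G₂ x * a) → (∀ a : A, G₂ (i a) = a) →
      G₁ p = G₂ p → G₁ = G₂) := by
  -- basic multiplicative structure of p, q
  have hpq1 : p + q = 1 := by
    rw [hp, hq, ← map_add]; norm_num; exact map_one j
  have hpp : p * p = p := by rw [hp, ← map_mul]; norm_num
  have hpq0 : p * q = 0 := by rw [hp, hq, ← map_mul]; norm_num [Prod.mk_mul_mk]; exact map_zero j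
  have hqp0 : q * p = 0 := by rw [hp, hq, ← map_mul]; norm_num [Prod.mk_mul_mk]; exact map_zero j
  have hqq : q * q = q := by rw [hq, ← map_mul]; norm_num
  -- every element of X decomposes
  have hdecomp : ∀ x : X, ∃ u v : A, x = i u * p + i v * q := by
    intro x
    obtain ⟨t, ht⟩ := h1.2 x
    subst ht
    induction t using TensorProduct.induction_on with
    | zero => exact ⟨0, 0, by simp⟩
    | tmul a b =>
      refine ⟨b.1 • a, b.2 • a, ?_⟩
      have hb : b = b.1 • ((1,0) : R × R) + b.2 • ((0,1) : R × R) := by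
        simp [Prod.ext_iff]
      simp only [blendMul, LinearMap.coe_comp, Function.comp_apply, TensorProduct.map_tmul,
        LinearMap.mul'_apply, AlgHom.toLinearMap_apply]
      rw [hb, map_add, map_smul, map_smul, ← hp, ← hq, map_smul, map_smul]
      rw [mul_add, mul_smul_comm, mul_smul_comm, smul_mul_assoc, smul_mul_assoc]
      simp
    | add s t hs ht =>
      obtain ⟨u, v, hu⟩ := hs
      obtain ⟨u', v', hv⟩ := ht
      refine ⟨u + u', v + v', ?_⟩
      rw [map_add, hu, hv, map_add, map_add]
      noncomm_ring
  -- the decomposition is unique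
  have huniq : ∀ u v u' v' : A, i u * p + i v * q = i u' * p + i v' * q →
      u = u' ∧ v = v' := by
    intro u v u' v' hEq
    have key : (u ⊗ₜ[R] ((1:R),(0:R)) + v ⊗ₜ ((0:R),(1:R)) : A ⊗[R] (R × R)) =
        u' ⊗ₜ ((1:R),(0:R)) + v' ⊗ₜ ((0:R),(1:R)) := by
      apply h1.1
      simpa [blendMul, ← hp, ← hq] using hEq
    let π₁ : A ⊗[R] (R × R) →ₗ[R] A :=
      (TensorProduct.rid R A).toLinearMap.comp
        (TensorProduct.map LinearMap.id (LinearMap.fst R R R))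
    let π₂ : A ⊗[R] (R × R) →ₗ[R] A :=
      (TensorProduct.rid R A).toLinearMap.comp
        (TensorProduct.map LinearMap.id (LinearMap.snd R R R))
    constructor
    · have := congrArg π₁ key
      simpa [π₁] using this
    · have := congrArg π₂ key
      simpa [π₂] using this
  -- commutation relations
  have hcomm : ∀ a : A, p * i a = i (E a) * p + i (a - F a) * q ∧
      q * i a = i (a - E a) * p + i (F a) * q := by
    intro a
    obtain ⟨u, v, huv⟩ := hdecomp (p * i a)
    obtain ⟨u', v', huv'⟩ := hdecomp (q * i a)
    have hu : u = E a := by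
      have h₁ : p * i a * p = i u * p := by
        rw [huv, add_mul, mul_assoc, mul_assoc, hpp, hqp0, mul_zero, add_zero]
      have h₂ : i u * p + i (0:A) * q = i (E a) * p + i (0:A) * q := by
        rw [map_zero, zero_mul, add_zero, add_zero, ← h₁, hE]
      exact (huniq _ _ _ _ h₂).1
    have hv' : v' = F a := by
      have h₁ : q * i a * q = i v' * q := by
        rw [huv', add_mul, mul_assoc, mul_assoc, hpq0, hqq, mul_zero, zero_add]
      have h₂ : i (0:A) * p + i v' * q = i (0:A) * p + i (F a) * q := by
        rw [map_zero, zero_mul, zero_add, zero_add, ← h₁, hF]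
      exact (huniq _ _ _ _ h₂).2
    have hsum : u + u' = a ∧ v + v' = a := by
      have h₁ : i (u + u') * p + i (v + v') * q = i a * p + i a * q := by
        rw [map_add, map_add, add_mul, add_mul]
        have : p * i a + q * i a = i a * p + i a * q := by
          rw [← add_mul, hpq1, one_mul, ← mul_add, hpq1, mul_one]
        rw [← this, huv, huv']
        abel
      exact huniq _ _ _ _ h₁
    have hu' : u' = a - E a := by
      rw [eq_sub_iff_add_eq, ← hu, add_comm]; exact hsum.1
    have hv : v = a - F a := by
      rw [eq_sub_iff_add_eq, ← hv']; exact hsum.2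
    constructor
    · rw [huv, hu, hv]
    · rw [huv', hu', hv']
  refine ⟨?_, ?_, ?_⟩
  · -- part 1
    intro G hl hr hid a
    have hG1 : G 1 = 1 := by
      have := hid 1; rwa [map_one] at this
    have hGq : G q = 1 - G p := by
      have : q = 1 - p := by rw [← hpq1]; abel
      rw [this, map_sub, hG1]
    have h₁ : G (p * i a) = G p * a := hr p a
    have h₂ : G (p * i a) = E a * G p + (a - F a) * (1 - G p) := by
      rw [(hcomm a).1, map_add, hl, hl, hGq]
    rw [h₁] at h₂
    rw [h₂]; noncomm_ring
  · -- part 2: existence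
    intro h heq
    let σ : (R × R) →ₗ[R] A :=
      (LinearMap.toSpanSingleton R A h).comp (LinearMap.fst R R R) +
        (LinearMap.toSpanSingleton R A (1 - h)).comp (LinearMap.snd R R R)
    let T : A ⊗[R] (R × R) →ₗ[R] A :=
      (LinearMap.mul' R A).comp (TensorProduct.map LinearMap.id σ)
    let Φ : (A ⊗[R] (R × R)) ≃ₗ[R] X := LinearEquiv.ofBijective (blendMul R i j) h1
    let G : X →ₗ[R] A := T.comp Φ.symm.toLinearMap
    have hG : ∀ u v : A, G (i u * p + i v * q) = u * h + v * (1 - h) := by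
      intro u v
      have hΦ : Φ (u ⊗ₜ[R] ((1:R),(0:R)) + v ⊗ₜ ((0:R),(1:R))) = i u * p + i v * q := by
        simp [Φ, LinearEquiv.ofBijective_apply, blendMul, ← hp, ← hq]
      have hsymm : Φ.symm (i u * p + i v * q) =
          u ⊗ₜ[R] ((1:R),(0:R)) + v ⊗ₜ ((0:R),(1:R)) := by
        rw [← hΦ, LinearEquiv.symm_apply_apply]
      show T (Φ.symm (i u * p + i v * q)) = u * h + v * (1 - h)
      rw [hsymm]
      simp [T, σ, LinearMap.toSpanSingleton_apply]
    refine ⟨G, ?_, ?_, ?_, ?_, fun a b => hG a b⟩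
    · intro a x
      obtain ⟨u, v, hx⟩ := hdecomp x
      subst hx
      have : i a * (i u * p + i v * q) = i (a * u) * p + i (a * v) * q := by
        rw [map_mul, map_mul]; noncomm_ring
      rw [this, hG, hG]
      noncomm_ring
    · intro x a
      obtain ⟨u, v, hx⟩ := hdecomp x
      subst hx
      have hxe : (i u * p + i v * q) * i a =
          i (u * E a + v * (a - E a)) * p + i (u * (a - F a) + v * F a) * q := by
        rw [add_mul, mul_assoc, mul_assoc, (hcomm a).1, (hcomm a).2]
        rw [map_add, map_add, map_mul, map_mul, map_mul, map_mul]
        noncomm_ring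
      rw [hxe, hG, hG]
      calc (u * E a + v * (a - E a)) * h + (u * (a - F a) + v * F a) * (1 - h)
          = u * ((E a + F a - a) * h + (a - F a)) + v * a
            - v * ((E a + F a - a) * h + (a - F a)) := by noncomm_ring
        _ = u * (h * a) + v * a - v * (h * a) := by rw [← heq]
        _ = (u * h + v * (1 - h)) * a := by noncomm_ring
    · intro a
      have : i a = i a * p + i a * q := by
        rw [← mul_add, hpq1, mul_one]
      rw [this, hG]
      noncomm_ring
    · have : p = i (1:A) * p + i (0:A) * q := by simp
      rw [this, hG]
      simp
  · -- part 3: uniqueness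
    intro G₁ G₂ hl₁ hr₁ hid₁ hl₂ hr₂ hid₂ hGp
    ext x
    obtain ⟨u, v, hx⟩ := hdecomp x
    subst hx
    have hG1 : G₁ 1 = 1 := by have := hid₁ 1; rwa [map_one] at this
    have hG2 : G₂ 1 = 1 := by have := hid₂ 1; rwa [map_one] at this
    have hq1 : G₁ q = 1 - G₁ p := by
      have hq' : q = 1 - p := by rw [← hpq1]; abel
      rw [hq', map_sub, hG1]
    have hq2 : G₂ q = 1 - G₂ p := by
      have hq' : q = 1 - p := by rw [← hpq1]; abel
      rw [hq', map_sub, hG2]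
    rw [map_add, map_add, hl₁, hl₁, hl₂, hl₂, hq1, hq2, hGp]
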